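/- Let 𝒜 be a nonempty finite set, T_S : 𝒜 → ℕ, T ∈ ℕ, and ρ ∈ (0, 1]. Suppose (τ*, n*) is an optimal solution for the LP (with T_S regarded as real-valued and budget T). Suppose N* : 𝒜 → ℕ satisfies ∑_{a∈𝒜} N*(a) = T and maximizes the objective F(N) := ∑_{a∈𝒜} ∑_{k=1}^{N(a)} (k + T_S(a))^{−ρ/2} over all N : 𝒜 → ℕ with ∑_{a∈𝒜} N(a) = T. Then for every a ∈ 𝒜, N*(a) ≤ max(⌈τ*⌉ − T_S(a), 0). -/

import Mathlib

/-- `(τ, n)` is a feasible pair for the LP with offline sample sizes `TS` and budget `T`. -/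
def LPfeasible {α : Type*} [Fintype α] (TS : α → ℝ) (T : ℝ) (τ : ℝ) (n : α → ℝ) : Prop :=
  0 ≤ τ ∧ (∀ a, 0 ≤ n a) ∧ (∑ a, n a) = T ∧ ∀ a, τ ≤ TS a + n a

/-- Any integral maximizer of `N ↦ ∑ a, ∑_{k=1}^{N a} (k + TS a)^{-ρ/2}` subject to
`∑ a, N a = T` satisfies `N*(a) ≤ max (⌈τ*⌉ - TS a) 0` for every arm `a`, where `τ*` is the
optimum of the LP. -/
theorem ip_maximizer_bounded_by_lp
    {α : Type*} [Fintype α] [Nonempty α]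
    (TS : α → ℕ) (T : ℕ) (ρ : ℝ) (hρ0 : 0 < ρ) (hρ1 : ρ ≤ 1)
    (τstar : ℝ) (nstar : α → ℝ)
    (hfeas : LPfeasible (fun a => (TS a : ℝ)) (T : ℝ) τstar nstar)
    (hopt : ∀ τ n, LPfeasible (fun a => (TS a : ℝ)) (T : ℝ) τ n → τ ≤ τstar)
    (Nstar : α → ℕ) (hNsum : ∑ a, Nstar a = T)
    (hNmax : ∀ N : α → ℕ, ∑ a, N a = T →
      ∑ a, ∑ k ∈ Finset.Icc 1 (N a), ((k : ℝ) + (TS a : ℝ)) ^ (-(ρ / 2)) ≤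
        ∑ a, ∑ k ∈ Finset.Icc 1 (Nstar a), ((k : ℝ) + (TS a : ℝ)) ^ (-(ρ / 2))) :
    ∀ a, (Nstar a : ℤ) ≤ max (⌈τstar⌉ - (TS a : ℤ)) 0 := by
  classical
  intro a
  by_contra hcon
  push_neg at hcon
  obtain ⟨hτ0, hn0, hnsum, hτle⟩ := hfeas
  have ha1 : 1 ≤ Nstar a := by
    have := lt_of_le_of_lt (le_max_right (⌈τstar⌉ - (TS a : ℤ)) 0) hcon
    exact_mod_cast this
  have haZ : (⌈τstar⌉ : ℤ) + 1 ≤ (TS a : ℤ) + (Nstar a : ℤ) := by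
    have := lt_of_le_of_lt (le_max_left (⌈τstar⌉ - (TS a : ℤ)) 0) hcon
    omega
  have hceil := Int.le_ceil τstar
  have haR : τstar + 1 ≤ (TS a : ℝ) + (Nstar a : ℝ) := by
    have h1 : ((⌈τstar⌉ : ℤ) : ℝ) + 1 ≤ ((TS a : ℤ) : ℝ) + ((Nstar a : ℤ) : ℝ) := by
      exact_mod_cast haZ
    push_cast at h1 ⊢
    linarith
  -- Step 1: there exists an arm strictly below τstar
  have hexb : ∃ b, (TS b : ℝ) + (Nstar b : ℝ) < τstar := by
    by_contra hall
    push_neg at hall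
    set m : ℕ := Fintype.card α with hm
    have hm1 : 1 ≤ m := Fintype.card_pos
    have hmR : (1 : ℝ) ≤ (m : ℝ) := by exact_mod_cast hm1
    set ε : ℝ := 1 / (2 * (m : ℝ)) with hε
    have hε0 : 0 < ε := by positivity
    have hmε : (m : ℝ) * ε = 1 / 2 := by
      rw [hε]; field_simp
    have hεhalf : ε ≤ 1 / 2 := by
      rw [hε, div_le_div_iff₀ (by positivity) (by norm_num)]
      linarith
    set n' : α → ℝ := fun c => (Nstar c : ℝ) + ε - (if c = a then (m : ℝ) * ε else 0) with hn'
    have hsum' : (∑ c, n' c) = (T : ℝ) := by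
      rw [hn']
      rw [Finset.sum_sub_distrib, Finset.sum_add_distrib]
      rw [Finset.sum_ite_eq' Finset.univ a (fun _ => (m : ℝ) * ε)]
      simp only [Finset.mem_univ, if_true, Finset.sum_const, Finset.card_univ, nsmul_eq_mul]
      have : (∑ c, (Nstar c : ℝ)) = (T : ℝ) := by
        rw [← Nat.cast_sum, hNsum]
      rw [this]
      ring
    have hfeas' : LPfeasible (fun c => (TS c : ℝ)) (T : ℝ) (τstar + ε) n' := by
      refine ⟨by linarith, ?_, hsum', ?_⟩
      · intro c
        rw [hn']
        by_cases hc : c = a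
        · subst hc
          simp only [if_true, hmε]
          have : (1 : ℝ) ≤ (Nstar c : ℝ) := by exact_mod_cast ha1
          linarith
        · simp only [hc, if_false, sub_zero]
          positivity
      · intro c
        rw [hn']
        by_cases hc : c = a
        · subst hc
          simp only [if_true, hmε]
          linarith
        · simp only [hc, if_false]
          have := hall c
          linarith
    have := hopt (τstar + ε) n' hfeas'
    linarith
  obtain ⟨b, hb⟩ := hexb
  have hbZ : (TS b : ℤ) + (Nstar b : ℤ) ≤ ⌈τstar⌉ - 1 := by
    have : (TS b : ℤ) + (Nstar b : ℤ) < ⌈τstar⌉ := by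
      rw [Int.lt_ceil]; push_cast; exact_mod_cast hb
    omega
  have hab : a ≠ b := by
    intro h; subst h; omega
  -- the swapped allocation
  set N : α → ℕ := Function.update (Function.update Nstar a (Nstar a - 1)) b (Nstar b + 1)
    with hN
  have hNa : N a = Nstar a - 1 := by
    rw [hN, Function.update_of_ne hab, Function.update_self]
  have hNb : N b = Nstar b + 1 := by
    rw [hN, Function.update_self]
  have hNc : ∀ c, c ≠ a → c ≠ b → N c = Nstar c := by
    intro c hca hcb
    rw [hN, Function.update_of_ne hcb, Function.update_of_ne hca]
  -- sum of N equals T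
  have hsumN : ∑ c, N c = T := by
    have h1 : ∑ c, N c = (Nstar b + 1) +
        ∑ c ∈ Finset.univ \ {b}, Function.update Nstar a (Nstar a - 1) c := by
      rw [hN, Finset.sum_update_of_mem (Finset.mem_univ b)]
    have hamem : a ∈ Finset.univ \ {b} := by
      simp [hab]
    have h2 : ∑ c ∈ Finset.univ \ {b}, Function.update Nstar a (Nstar a - 1) c =
        (Nstar a - 1) + ∑ c ∈ (Finset.univ \ {b}) \ {a}, Nstar c := by
      rw [Finset.sum_update_of_mem hamem]
    have h3 : ∑ c, Nstar c = ∑ c ∈ Finset.univ \ {b}, Nstar c + Nstar b :=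
      Finset.sum_eq_sum_sdiff_singleton_add (Finset.mem_univ b) _
    have h4 : ∑ c ∈ Finset.univ \ {b}, Nstar c =
        ∑ c ∈ (Finset.univ \ {b}) \ {a}, Nstar c + Nstar a :=
      Finset.sum_eq_sum_sdiff_singleton_add hamem _
    omega
  -- objective comparison
  set g : α → ℕ → ℝ := fun c n => ∑ k ∈ Finset.Icc 1 n, ((k : ℝ) + (TS c : ℝ)) ^ (-(ρ / 2))
    with hg
  set ta : ℝ := ((Nstar a : ℝ) + (TS a : ℝ)) ^ (-(ρ / 2)) with hta
  set tb : ℝ := (((Nstar b : ℝ) + 1) + (TS b : ℝ)) ^ (-(ρ / 2)) with htb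
  have hga : g a (Nstar a) = g a (N a) + ta := by
    obtain ⟨n₀, hn₀⟩ : ∃ n₀, Nstar a = n₀ + 1 := ⟨Nstar a - 1, by omega⟩
    have hNa' : N a = n₀ := by omega
    rw [hNa', hg, hta, hn₀]
    simp only
    rw [Finset.sum_Icc_succ_top (by omega)]
  have hgb : g b (N b) = g b (Nstar b) + tb := by
    rw [hNb, hg, htb]
    simp only
    rw [Finset.sum_Icc_succ_top (by omega)]
    push_cast
    ring_nf
    simp only [add_comm, add_left_comm]
  have hdiff : ∑ c, g c (N c) - ∑ c, g c (Nstar c) = tb - ta := by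
    rw [← Finset.sum_sub_distrib]
    rw [Finset.sum_eq_add a b hab
      (f := fun c => g c (N c) - g c (Nstar c))
      (by intro c _ hc
          show g c (N c) - g c (Nstar c) = 0
          rw [hNc c hc.1 hc.2]; ring)
      (by intro h; exact absurd (Finset.mem_univ a) h)
      (by intro h; exact absurd (Finset.mem_univ b) h)]
    rw [hga, hgb]
    ring
  -- strict inequality between the swapped terms
  have hbase : ((Nstar b : ℝ) + 1) + (TS b : ℝ) < (Nstar a : ℝ) + (TS a : ℝ) := by
    have h1 : ((TS b : ℤ) + (Nstar b : ℤ)) + 1 < (TS a : ℤ) + (Nstar a : ℤ) := by omega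
    have : (((TS b : ℤ) : ℝ) + ((Nstar b : ℤ) : ℝ)) + 1 < ((TS a : ℤ) : ℝ) + ((Nstar a : ℤ) : ℝ) := by
      exact_mod_cast h1
    push_cast at this
    linarith
  have hpos : (0 : ℝ) < (Nstar b : ℝ) + 1 + (TS b : ℝ) := by positivity
  have hlt : ta < tb := by
    rw [hta, htb]
    exact Real.rpow_lt_rpow_of_neg hpos hbase (by linarith)
  have hle := hNmax N hsumN
  rw [hg] at hdiff
  simp only at hdiff hle
  linarith
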